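/- Let 0 ≤ α < 1, 0 < τ ≤ e^{−2} and a ≥ 1. Then ∫_0^∞ e^{−as} min(s^{−1} τ, s^{−α}) ds ≤ (2/(1−α)) |log τ| τ. -/

import Mathlib

open MeasureTheory Set Real

/-- Lemma 3.10, third estimate: for `0 ≤ α < 1`, `0 < τ ≤ e⁻²`, `a ≥ 1`,
`∫₀^∞ e^{-as} min(s⁻¹τ, s^{-α}) ds ≤ (2/(1-α)) |log τ| τ`. -/
theorem exp_l_integral_estimate_infinite
    (α τ a : ℝ) (hα0 : 0 ≤ α) (hα1 : α < 1)
    (hτ0 : 0 < τ) (hτ1 : τ ≤ Real.exp (-2)) (ha : 1 ≤ a) :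
    ∫ s in Set.Ioi (0:ℝ), Real.exp (-a * s) * min (s⁻¹ * τ) (s ^ (-α))
      ≤ 2 / (1 - α) * |Real.log τ| * τ := by
  have h1α : 0 < 1 - α := by linarith
  set f : ℝ → ℝ := fun s => Real.exp (-a * s) * min (s⁻¹ * τ) (s ^ (-α)) with hfdef
  have hfmeas : Measurable f := by
    apply Measurable.mul (by fun_prop)
    exact (measurable_inv.mul_const τ).min (by fun_prop)
  -- the splitting point
  set σ : ℝ := τ ^ ((1:ℝ)/(1-α)) with hσdef
  have hσ0 : 0 < σ := Real.rpow_pos_of_pos hτ0 _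
  have hτle1 : τ ≤ 1 := hτ1.trans (by rw [Real.exp_le_one_iff]; norm_num)
  have hσ1 : σ ≤ 1 := Real.rpow_le_one hτ0.le hτle1 (by positivity)
  have hσpow : σ ^ (1-α) = τ := by
    rw [hσdef, ← Real.rpow_mul hτ0.le, one_div_mul_cancel h1α.ne', Real.rpow_one]
  have hlogσ : Real.log σ = (1/(1-α)) * Real.log τ := Real.log_rpow hτ0 _
  have hlogτ : Real.log τ ≤ -2 := (Real.log_le_iff_le_exp hτ0).2 hτ1
  have habs : |Real.log τ| = -Real.log τ := abs_of_neg (by linarith)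
  -- nonnegativity of f on positive reals
  have hfnn : ∀ s : ℝ, 0 < s → 0 ≤ f s := fun s hs => by
    apply mul_nonneg (Real.exp_nonneg _)
    exact le_min (mul_nonneg (inv_nonneg.2 hs.le) hτ0.le) (Real.rpow_nonneg hs.le _)
  -- generic helper
  have key : ∀ (S : Set ℝ) (g : ℝ → ℝ), MeasurableSet S → S ⊆ Ioi 0 →
      IntegrableOn g S → (∀ s ∈ S, f s ≤ g s) →
      IntegrableOn f S ∧ ∫ s in S, f s ≤ ∫ s in S, g s := by
    intro S g hS hSsub hg hle
    have hint : IntegrableOn f S := by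
      refine hg.mono' (hfmeas.aestronglyMeasurable.restrict) ?_
      refine (ae_restrict_iff' hS).2 (Filter.Eventually.of_forall fun s hs => ?_)
      rw [Real.norm_eq_abs, abs_of_nonneg (hfnn s (hSsub hs))]
      exact hle s hs
    exact ⟨hint, setIntegral_mono_on hint hg hS hle⟩
  -- piece 1 : Ioc 0 σ
  have hg1 : IntegrableOn (fun s : ℝ => s ^ (-α)) (Ioc 0 σ) := by
    have := intervalIntegral.intervalIntegrable_rpow' (a := 0) (b := σ) (r := -α) (by linarith)
    exact (intervalIntegrable_iff_integrableOn_Ioc_of_le hσ0.le).1 this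
  have hle1 : ∀ s ∈ Ioc (0:ℝ) σ, f s ≤ s ^ (-α) := by
    intro s hs
    calc f s ≤ 1 * (s ^ (-α)) := by
          apply mul_le_mul (Real.exp_le_one_iff.2 (by nlinarith [hs.1]))
            (min_le_right _ _)
            (le_min (mul_nonneg (inv_nonneg.2 hs.1.le) hτ0.le) (Real.rpow_nonneg hs.1.le _))
            zero_le_one
      _ = s ^ (-α) := one_mul _
  have h1 := key (Ioc 0 σ) _ measurableSet_Ioc Ioc_subset_Ioi_self hg1 hle1
  have hval1 : ∫ s in Ioc (0:ℝ) σ, s ^ (-α) = τ / (1-α) := by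
    rw [← intervalIntegral.integral_of_le hσ0.le,
      integral_rpow (Or.inl (by linarith : (-1:ℝ) < -α)),
      Real.zero_rpow (by linarith : (-α) + 1 ≠ 0),
      show -α + 1 = 1 - α by ring, hσpow]
    ring
  -- piece 2 : Ioc σ 1
  have hcont2 : ContinuousOn (fun s : ℝ => τ * s⁻¹) (Icc σ 1) :=
    continuousOn_const.mul (continuousOn_id.inv₀ fun x hx => (lt_of_lt_of_le hσ0 hx.1).ne')
  have hg2 : IntegrableOn (fun s : ℝ => τ * s⁻¹) (Ioc σ 1) :=
    (hcont2.integrableOn_compact isCompact_Icc).mono_set Ioc_subset_Icc_self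
  have hle2 : ∀ s ∈ Ioc σ (1:ℝ), f s ≤ τ * s⁻¹ := by
    intro s hs
    have hs0 : 0 < s := lt_of_lt_of_le hσ0 hs.1.le
    calc f s ≤ 1 * (s⁻¹ * τ) := by
          apply mul_le_mul (Real.exp_le_one_iff.2 (by nlinarith))
            (min_le_left _ _)
            (le_min (mul_nonneg (inv_nonneg.2 hs0.le) hτ0.le) (Real.rpow_nonneg hs0.le _))
            zero_le_one
      _ = τ * s⁻¹ := by ring
  have h2 := key (Ioc σ 1) _ measurableSet_Ioc
    (fun x hx => lt_of_lt_of_le hσ0 hx.1.le) hg2 hle2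
  have hval2 : ∫ s in Ioc σ (1:ℝ), τ * s⁻¹ = τ * (|Real.log τ| / (1-α)) := by
    rw [MeasureTheory.integral_const_mul, ← intervalIntegral.integral_of_le hσ1,
      integral_inv (by
        intro h
        rcases Set.mem_uIcc.1 h with h | h
        · exact absurd h.1 (not_le.2 hσ0)
        · norm_num at h)]
    rw [Real.log_div one_ne_zero hσ0.ne', Real.log_one, hlogσ, habs]
    ring
  -- piece 3 : Ioi 1
  have hg3 : IntegrableOn (fun s : ℝ => τ * Real.exp (-s)) (Ioi 1) := by
    have := (exp_neg_integrableOn_Ioi (1:ℝ) (b := 1) one_pos).const_mul τ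
    simpa [IntegrableOn] using this
  have hle3 : ∀ s ∈ Ioi (1:ℝ), f s ≤ τ * Real.exp (-s) := by
    intro s hs
    have hs1 : (1:ℝ) < s := hs
    have hs0 : 0 < s := lt_trans one_pos hs1
    have hmin : min (s⁻¹ * τ) (s ^ (-α)) ≤ τ := by
      refine (min_le_left _ _).trans ?_
      calc s⁻¹ * τ ≤ 1 * τ := by
            apply mul_le_mul_of_nonneg_right _ hτ0.le
            rw [inv_le_one_iff₀]; right; exact hs1.le
        _ = τ := one_mul _
    calc f s ≤ Real.exp (-s) * τ := by
          apply mul_le_mul _ hmin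
            (le_min (mul_nonneg (inv_nonneg.2 hs0.le) hτ0.le) (Real.rpow_nonneg hs0.le _))
            (Real.exp_nonneg _)
          exact Real.exp_le_exp.2 (by nlinarith)
      _ = τ * Real.exp (-s) := by ring
  have h3 := key (Ioi 1) _ measurableSet_Ioi
    (fun x hx => show (0:ℝ) < x from lt_trans one_pos hx) hg3 hle3
  have hval3 : ∫ s in Ioi (1:ℝ), τ * Real.exp (-s) = τ * Real.exp (-1) := by
    rw [MeasureTheory.integral_const_mul, integral_exp_neg_Ioi]
  -- assemble
  have hsplit : Ioi (0:ℝ) = (Ioc 0 σ ∪ Ioc σ 1) ∪ Ioi 1 := by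
    rw [Set.Ioc_union_Ioc_eq_Ioc hσ0.le hσ1, Set.Ioc_union_Ioi_eq_Ioi (by norm_num : (0:ℝ) ≤ 1)]
  have hdisj1 : Disjoint (Ioc (0:ℝ) σ) (Ioc σ 1) := Set.Ioc_disjoint_Ioc_of_le le_rfl
  have hdisj2 : Disjoint (Ioc (0:ℝ) σ ∪ Ioc σ 1) (Ioi 1) := by
    rw [Set.Ioc_union_Ioc_eq_Ioc hσ0.le hσ1]
    exact Set.Ioc_disjoint_Ioi le_rfl
  have heq : ∫ s in Ioi (0:ℝ), f s
      = (∫ s in Ioc (0:ℝ) σ, f s) + (∫ s in Ioc σ (1:ℝ), f s) + ∫ s in Ioi (1:ℝ), f s := by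
    rw [hsplit, setIntegral_union hdisj2 measurableSet_Ioi (h1.1.union h2.1) h3.1,
      setIntegral_union hdisj1 measurableSet_Ioc h1.1 h2.1]
  calc ∫ s in Ioi (0:ℝ), f s
      = (∫ s in Ioc (0:ℝ) σ, f s) + (∫ s in Ioc σ (1:ℝ), f s) + ∫ s in Ioi (1:ℝ), f s := heq
    _ ≤ τ / (1-α) + τ * (|Real.log τ| / (1-α)) + τ * Real.exp (-1) := by
        have := h1.2; have := h2.2; have := h3.2
        rw [hval1] at *; rw [hval2] at *; rw [hval3] at *
        gcongr
    _ ≤ 2 / (1 - α) * |Real.log τ| * τ := by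
        have he : Real.exp (-1) ≤ 1 := by rw [Real.exp_le_one_iff]; norm_num
        have habs2 : 2 ≤ |Real.log τ| := by rw [habs]; linarith
        have hEc : Real.exp (-1) * (1-α) ≤ 1 :=
          mul_le_one₀ he (by linarith) (by linarith)
        calc τ / (1-α) + τ * (|Real.log τ| / (1-α)) + τ * Real.exp (-1)
            = (τ + τ * |Real.log τ| + τ * (Real.exp (-1) * (1-α))) / (1-α) := by
              field_simp
          _ ≤ (2 * |Real.log τ| * τ) / (1-α) := by
              gcongr ?_ / (1-α)
              nlinarith [mul_nonneg hτ0.le (by linarith : (0:ℝ) ≤ |Real.log τ| - 2),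
                mul_nonneg hτ0.le (by nlinarith [Real.exp_nonneg (-1:ℝ)] : (0:ℝ) ≤ 1 - Real.exp (-1) * (1-α))]
          _ = 2 / (1 - α) * |Real.log τ| * τ := by ring
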